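/- Let w, y ∈ W^J with y ≤ w. Then P^{J,−1}_{y,w} = Σ_{x ∈ W_J, yx ≤ w} (−1)^{ℓ(x)} P_{yx,w}, where P_{yx,w} are the ordinary Kazhdan–Lusztig polynomials of (W,S). -/

import Mathlib

namespace KLPaper

open Polynomial
open scoped Classical

variable {B : Type*} {W : Type*} [Group W] {M : CoxeterMatrix B}

/-- The Bruhat order on a Coxeter group: generated by right multiplication by
reflections which increases the length. -/
def bruhatLE (cs : CoxeterSystem M W) : W → W → Prop :=
  Relation.ReflTransGen (fun x y =>
    (∃ t, cs.IsReflection t ∧ y = x * t) ∧ cs.length x < cs.length y)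

/-- A commutative ring `R` containing `ℤ[q,q⁻¹]`, with a direct sum decomposition
`R = ⊕_{k ∈ ℤ} R_k` into additive subgroups and an involutive ring endomorphism `conj`
such that `R_i R_j ⊆ R_{i+j}`, `conj R_i = R_{-i}`, `1 ∈ R_0`, `q ∈ R_2`, `conj q = q⁻¹`. -/
structure KLRing (R : Type*) [CommRing R] where
  q : R
  qinv : R
  q_qinv : q * qinv = 1
  grade : ℤ → AddSubgroup R
  decomp : DirectSum.IsInternal grade
  conj : R →+* R
  conj_conj : ∀ r : R, conj (conj r) = r
  grade_mul : ∀ (i j : ℤ) (r s : R), r ∈ grade i → s ∈ grade j → r * s ∈ grade (i + j)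
  conj_grade : ∀ (i : ℤ) (r : R), r ∈ grade i → conj r ∈ grade (-i)
  one_mem : (1 : R) ∈ grade 0
  q_mem : q ∈ grade 2
  conj_q : conj q = qinv
  laurent_inj : Function.Injective fun f : ℤ →₀ ℤ =>
    f.sum fun k c => c • (if 0 ≤ k then q ^ k.toNat else qinv ^ (-k).toNat)

variable {R : Type*} [CommRing R]

/-- The subgroup `R_0 + R_1 + ⋯ + R_{n-1} = ⊕_{i=0}^{n-1} R_i` of `R`. -/
def KLRing.gradeSum (K : KLRing R) (n : ℕ) : AddSubgroup R :=
  ⨆ i ∈ Finset.range n, K.grade (i : ℤ)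

/-- `r` belongs to `ℤ[q] ⊆ R`. -/
def KLRing.InZq (K : KLRing R) (r : R) : Prop :=
  ∃ p : Polynomial ℤ, Polynomial.aeval K.q p = r

/-- The Hecke algebra of `(W, S)` over `R`: the free `R`-module with basis
`{T_w}_{w ∈ W}`, with multiplication determined by `T_{w₁} T_{w₂} = T_{w₁ w₂}`
whenever `ℓ(w₁w₂) = ℓ(w₁) + ℓ(w₂)` and `(T_s + 1)(T_s - q) = 0` for `s ∈ S`. -/
structure Hecke (cs : CoxeterSystem M W) (R : Type*) [CommRing R] (q : R) where
  carrier : Type*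
  [ring : Ring carrier]
  [alg : Algebra R carrier]
  T : W → carrier
  basis : Module.Basis W R carrier
  basis_eq : ∀ w : W, basis w = T w
  T_mul : ∀ w₁ w₂ : W, cs.length (w₁ * w₂) = cs.length w₁ + cs.length w₂ →
    T w₁ * T w₂ = T (w₁ * w₂)
  T_quad : ∀ i : B, (T (cs.simple i) + 1) * (T (cs.simple i) - algebraMap R carrier q) = 0

attribute [instance] Hecke.ring Hecke.alg

variable {cs : CoxeterSystem M W}

/-- `bar` is the bar involution `Σ r_w T_w ↦ Σ conj(r_w) (T_{w⁻¹})⁻¹` of the Hecke algebra. -/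
def IsBar (K : KLRing R) (Hk : Hecke cs R K.q) (bar : Hk.carrier →+* Hk.carrier) : Prop :=
  ∀ (r : R) (w : W), bar (r • Hk.T w) = K.conj r • Ring.inverse (Hk.T w⁻¹)

/-- `j` is the involution `j(Σ r_w T_w) = Σ r_w (-q)^{ℓ(w)} (T_{w⁻¹})⁻¹` of the Hecke algebra. -/
def IsJ (K : KLRing R) (Hk : Hecke cs R K.q) (j : Hk.carrier →ₐ[R] Hk.carrier) : Prop :=
  ∀ w : W, j (Hk.T w) = (-K.q) ^ cs.length w • Ring.inverse (Hk.T w⁻¹)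

/-- `C` is the Kazhdan–Lusztig basis element `C_w`:
`C = Σ_{y ≤ w} P_{y,w} T_y` with `P_{w,w} = 1`,
`P_{y,w} ∈ ⊕_{i=0}^{ℓ(w)-ℓ(y)-1} R_i` for `y < w`, and `bar C = q^{-ℓ(w)} C`.
(The coefficient `P_{y,w}` of `C_w` is `Hk.basis.repr C y`.) -/
def IsKLElt (K : KLRing R) (Hk : Hecke cs R K.q)
    (bar : Hk.carrier →+* Hk.carrier) (w : W) (C : Hk.carrier) : Prop :=
  Hk.basis.repr C w = 1 ∧
  (∀ y : W, Hk.basis.repr C y ≠ 0 → bruhatLE cs y w) ∧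
  (∀ y : W, bruhatLE cs y w → y ≠ w →
    Hk.basis.repr C y ∈ K.gradeSum (cs.length w - cs.length y)) ∧
  bar C = K.qinv ^ cs.length w • C

/-- The standard parabolic subgroup `W_J = ⟨J⟩`. -/
def WJ (cs : CoxeterSystem M W) (J : Set B) : Subgroup W :=
  Subgroup.closure (cs.simple '' J)

/-- `W^J`: the set of minimal length coset representatives of `W/W_J`,
i.e. the `w ∈ W` with `ws > w` for all `s ∈ J`. -/
def minReps (cs : CoxeterSystem M W) (J : Set B) : Set W :=
  {w | ∀ i ∈ J, cs.length w < cs.length (w * cs.simple i)}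

/-- The Hecke algebra `H(W_J)` of the standard parabolic subgroup `W_J`
(with generating set `J`; the length function of `(W_J, J)` is the restriction
of that of `(W, S)`). -/
structure HeckeJ (cs : CoxeterSystem M W) (J : Set B) (R : Type*) [CommRing R] (q : R) where
  carrier : Type*
  [ring : Ring carrier]
  [alg : Algebra R carrier]
  T : WJ cs J → carrier
  basis : Module.Basis (WJ cs J) R carrier
  basis_eq : ∀ x, basis x = T x
  T_mul : ∀ x₁ x₂ : WJ cs J,
    cs.length ((x₁ : W) * (x₂ : W)) = cs.length (x₁ : W) + cs.length (x₂ : W) →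
    T x₁ * T x₂ = T (x₁ * x₂)
  T_quad : ∀ (i : B) (hi : i ∈ J),
    (T ⟨cs.simple i, Subgroup.subset_closure ⟨i, hi, rfl⟩⟩ + 1) *
      (T ⟨cs.simple i, Subgroup.subset_closure ⟨i, hi, rfl⟩⟩ - algebraMap R carrier q) = 0

attribute [instance] HeckeJ.ring HeckeJ.alg

/-- `(Mod, φ)` is (a realization of) the induced module `H^{J,a} = H ⊗_{H(W_J)} R^a`
together with `φ = φ^{J,a} : h ↦ h ⊗ 1^a`:  `φ` is surjective and its kernel is
the `R`-span of the elements `h (T_s - a)`, `s ∈ J`, which is exactly the kernel of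
`h ↦ h ⊗ 1^a`. -/
def IsInduced {q : R} (Hk : Hecke cs R q) (J : Set B) (a : R)
    (Mod : Type*) [AddCommGroup Mod] [Module R Mod] (φ : Hk.carrier →ₗ[R] Mod) : Prop :=
  Function.Surjective φ ∧
  LinearMap.ker φ = Submodule.span R
    {h : Hk.carrier | ∃ (g : Hk.carrier) (i : B), i ∈ J ∧
      h = g * (Hk.T (cs.simple i) - algebraMap R Hk.carrier a)}

/-- `C` is the parabolic Kazhdan–Lusztig basis element `C_w^{J,a}` of `H^{J,a}`:
`C = Σ_{y ∈ W^J, y ≤ w} P^{J,a}_{y,w} T_y^{J,a}` with `P^{J,a}_{w,w} = 1`,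
`P^{J,a}_{y,w} ∈ ⊕_{i=0}^{ℓ(w)-ℓ(y)-1} R_i` for `y < w`, and `barJ C = q^{-ℓ(w)} C`,
where `b` is the basis `(T_y^{J,a})_{y ∈ W^J}` of `H^{J,a}` and `barJ` its bar involution.
(The coefficient `P^{J,a}_{y,w}` of `C_w^{J,a}` is `b.repr C y`.) -/
def IsKLEltJ (K : KLRing R) {J : Set B} {Mod : Type*} [AddCommGroup Mod] [Module R Mod]
    (b : Module.Basis (minReps cs J) R Mod) (barJ : Mod →+ Mod)
    (w : minReps cs J) (C : Mod) : Prop :=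
  b.repr C w = 1 ∧
  (∀ y : minReps cs J, b.repr C y ≠ 0 → bruhatLE cs y.1 w.1) ∧
  (∀ y : minReps cs J, bruhatLE cs y.1 w.1 → y ≠ w →
    b.repr C y ∈ K.gradeSum (cs.length w.1 - cs.length y.1)) ∧
  barJ C = K.qinv ^ cs.length w.1 • C


/-! ### Auxiliary lemmas -/

section Aux

variable {cs : CoxeterSystem M W} {R : Type*} [CommRing R]

/-- Bruhat order is monotone with respect to length. -/
theorem bruhatLE_length {x z : W} (h : bruhatLE cs x z) : cs.length x ≤ cs.length z := by
  induction h with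
  | refl => exact le_rfl
  | tail _ hstep ih => exact ih.trans hstep.2.le

theorem bruhatLE_length_lt {x z : W} (h : bruhatLE cs x z) (hne : x ≠ z) :
    cs.length x < cs.length z := by
  rcases (Relation.ReflTransGen.cases_head h) with rfl | ⟨c, hstep, hrest⟩
  · exact absurd rfl hne
  · exact hstep.2.trans_le (bruhatLE_length hrest)

/-- A word with letters in `J` has product in `W_J`. -/
theorem wordProd_mem_WJ {J : Set B} {ω : List B} (hω : ∀ i ∈ ω, i ∈ J) :
    cs.wordProd ω ∈ WJ cs J := by
  induction ω with
  | nil => rw [cs.wordProd_nil]; exact one_mem _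
  | cons i ω ih =>
    rw [cs.wordProd_cons]
    exact mul_mem (Subgroup.subset_closure ⟨i, hω i (by simp), rfl⟩)
      (ih fun j hj => hω j (by simp [hj]))

/-- Every element of `W_J` is the product of a word with letters in `J`. -/
theorem WJ_word {J : Set B} {x : W} (hx : x ∈ WJ cs J) :
    ∃ ω : List B, (∀ i ∈ ω, i ∈ J) ∧ x = cs.wordProd ω := by
  induction hx using Subgroup.closure_induction with
  | mem g hg =>
    obtain ⟨i, hi, rfl⟩ := hg
    exact ⟨[i], by simpa using hi, (cs.wordProd_singleton i).symm⟩
  | one => exact ⟨[], by simp, (cs.wordProd_nil).symm⟩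
  | mul g g' _ _ ihg ihg' =>
    obtain ⟨ω, hω, rfl⟩ := ihg
    obtain ⟨ω', hω', rfl⟩ := ihg'
    refine ⟨ω ++ ω', fun i hi => ?_, (cs.wordProd_append ω ω').symm⟩
    rcases List.mem_append.mp hi with h | h
    · exact hω i h
    · exact hω' i h
  | inv g _ ihg =>
    obtain ⟨ω, hω, rfl⟩ := ihg
    exact ⟨ω.reverse, fun i hi => hω i (List.mem_reverse.mp hi),
      (cs.wordProd_reverse ω).symm⟩

theorem length_wordProd_parity (cs : CoxeterSystem M W) (ω : List B) :
    cs.length (cs.wordProd ω) % 2 = ω.length % 2 := by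
  induction ω with
  | nil => simp
  | cons i ω ih =>
    rw [cs.wordProd_cons, cs.length_mul_mod_two, cs.length_simple, List.length_cons]
    omega

theorem neg_one_pow_length_wordProd (cs : CoxeterSystem M W) (ω : List B) :
    ((-1 : R)) ^ cs.length (cs.wordProd ω) = (-1 : R) ^ ω.length := by
  have h := length_wordProd_parity cs ω
  rcases Nat.even_or_odd ω.length with he | ho
  · have : Even (cs.length (cs.wordProd ω)) := by
      rw [Nat.even_iff] at he ⊢; omega
    rw [this.neg_one_pow, he.neg_one_pow]
  · have : Odd (cs.length (cs.wordProd ω)) := by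
      rw [Nat.odd_iff] at ho ⊢; omega
    rw [this.neg_one_pow, ho.neg_one_pow]

/-- Existence of the parabolic decomposition `z = u ⬝ π ω`, `u ∈ W^J`,
`ω` a word in `J` with `ℓ(z) = ℓ(u) + |ω|`. -/
theorem exists_decomp (cs : CoxeterSystem M W) (J : Set B) (z : W) :
    ∃ (u : W) (ω : List B), u ∈ minReps cs J ∧ (∀ i ∈ ω, i ∈ J) ∧
      z = u * cs.wordProd ω ∧ cs.length z = cs.length u + ω.length := by
  generalize hn : cs.length z = n
  induction n using Nat.strong_induction_on generalizing z with
  | _ n ih =>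
    by_cases hz : z ∈ minReps cs J
    · exact ⟨z, [], hz, by simp, by rw [cs.wordProd_nil, mul_one], by simp [hn]⟩
    · have : ∃ i ∈ J, ¬ cs.length z < cs.length (z * cs.simple i) := by
        by_contra h
        push_neg at h
        exact hz h
      obtain ⟨i, hiJ, hdesc⟩ := this
      push_neg at hdesc
      have hne := cs.length_mul_simple_ne z i
      have hlt : cs.length (z * cs.simple i) < n := by omega
      obtain ⟨u, ω, humem, hωJ, heq, hlen⟩ := ih _ hlt (z * cs.simple i) rfl
      refine ⟨u, ω ++ [i], humem, ?_, ?_, ?_⟩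
      · intro j hj
        rcases List.mem_append.mp hj with h | h
        · exact hωJ j h
        · simp at h; subst h; exact hiJ
      · rw [cs.wordProd_append, cs.wordProd_singleton, ← mul_assoc, ← heq,
          mul_assoc, cs.simple_mul_simple_self, mul_one]
      · have h2 : cs.length z ≤ cs.length (z * cs.simple i) + 1 := by
          have := cs.length_mul_le (z * cs.simple i) (cs.simple i)
          rw [mul_assoc, cs.simple_mul_simple_self, mul_one, cs.length_simple] at this
          exact this
        simp only [List.length_append, List.length_singleton]
        omega

/-- If lengths add along `u * π ω` then `u ≤ u * π ω` in Bruhat order. -/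
theorem chain_bruhatLE (cs : CoxeterSystem M W) (u : W) (ω : List B)
    (h : cs.length (u * cs.wordProd ω) = cs.length u + ω.length) :
    bruhatLE cs u (u * cs.wordProd ω) := by
  induction ω using List.reverseRecOn with
  | nil =>
    rw [cs.wordProd_nil, mul_one]
    exact Relation.ReflTransGen.refl
  | append_singleton ω i ih =>
    rw [cs.wordProd_append, cs.wordProd_singleton, ← mul_assoc] at h ⊢
    have h1 : cs.length (u * cs.wordProd ω) ≤ cs.length u + ω.length := by
      have := cs.length_mul_le u (cs.wordProd ω)
      have h2 := cs.length_wordProd_le ω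
      omega
    have h2 : cs.length (u * cs.wordProd ω * cs.simple i)
        ≤ cs.length (u * cs.wordProd ω) + 1 := by
      have := cs.length_mul_le (u * cs.wordProd ω) (cs.simple i)
      rw [cs.length_simple] at this
      exact this
    simp only [List.length_append, List.length_singleton] at h
    have hv : cs.length (u * cs.wordProd ω) = cs.length u + ω.length := by omega
    refine (ih hv).tail ⟨⟨cs.simple i, cs.isReflection_simple i, rfl⟩, ?_⟩
    omega

/-! #### KLRing lemmas -/

theorem KLRing.one_ne_zero' (K : KLRing R) : (1 : R) ≠ 0 := by
  intro h01
  have h1 : (Finsupp.single (0 : ℤ) (1 : ℤ)).sum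
      (fun k c => c • (if 0 ≤ k then K.q ^ k.toNat else K.qinv ^ (-k).toNat)) = 1 := by
    rw [Finsupp.sum_single_index (by simp)]
    simp
  have h0 : (0 : ℤ →₀ ℤ).sum
      (fun k c => c • (if 0 ≤ k then K.q ^ k.toNat else K.qinv ^ (-k).toNat)) = 0 :=
    Finsupp.sum_zero_index
  have := K.laurent_inj (a₁ := Finsupp.single (0 : ℤ) (1 : ℤ)) (a₂ := 0)
    (by show Finsupp.sum _ _ = Finsupp.sum _ _; rw [h1, h0, h01])
  exact one_ne_zero (Finsupp.single_eq_zero.mp this)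

theorem KLRing.qinv_mem (K : KLRing R) : K.qinv ∈ K.grade (-2) := by
  have := K.conj_grade 2 K.q K.q_mem
  rwa [K.conj_q] at this

theorem KLRing.qinv_pow_mem (K : KLRing R) (n : ℕ) :
    K.qinv ^ n ∈ K.grade (-2 * n) := by
  induction n with
  | zero => simpa using K.one_mem
  | succ m ih =>
    have := K.grade_mul _ _ _ _ ih K.qinv_mem
    rw [← pow_succ] at this
    convert this using 2
    push_cast
    ring

theorem KLRing.gradeSum_mono (K : KLRing R) {m n : ℕ} (h : m ≤ n) :
    K.gradeSum m ≤ K.gradeSum n := by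
  refine iSup₂_le fun i hi => ?_
  exact le_iSup₂_of_le i (Finset.mem_range.mpr ((Finset.mem_range.mp hi).trans_le h)) le_rfl

/-- The subgroup of elements whose graded components are supported in `A`. -/
def KLRing.window (K : KLRing R) (A : Set ℤ) : AddSubgroup R where
  carrier := {r | ∃ c : DirectSum ℤ (fun i => ↥(K.grade i)), DirectSum.coeAddMonoidHom K.grade c = r ∧
    ∀ j ∉ A, c j = 0}
  add_mem' := by
    rintro a b ⟨c, rfl, hc⟩ ⟨c', rfl, hc'⟩
    exact ⟨c + c', map_add _ _ _, fun j hj => by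
      rw [DirectSum.add_apply, hc j hj, hc' j hj, add_zero]⟩
  zero_mem' := ⟨0, map_zero _, fun j _ => rfl⟩
  neg_mem' := by
    rintro a ⟨c, rfl, hc⟩
    exact ⟨-c, map_neg _ _, fun j hj => by
      have : (-c) j = -(c j) := rfl
      rw [this, hc j hj, neg_zero]⟩

theorem KLRing.mem_window_of_grade (K : KLRing R) {A : Set ℤ} {i : ℤ} (hi : i ∈ A)
    {r : R} (hr : r ∈ K.grade i) : r ∈ K.window A := by
  refine ⟨DirectSum.of _ i ⟨r, hr⟩, DirectSum.coeAddMonoidHom_of _ _ _, fun j hj => ?_⟩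
  exact DirectSum.of_eq_of_ne i j _ (fun h => hj (h ▸ hi))

theorem KLRing.window_sum_decomp (K : KLRing R) {A : Set ℤ} {r : R}
    (hr : r ∈ K.window A) :
    ∃ (s : Finset ℤ) (f : ℤ → R), (∀ j ∈ s, f j ∈ K.grade j ∧ j ∈ A) ∧ r = ∑ j ∈ s, f j := by
  obtain ⟨c, rfl, hc⟩ := hr
  refine ⟨c.support.filter (fun j => (j : ℤ) ∈ A), fun j => (c j : R), fun j hj => ?_, ?_⟩
  · exact ⟨(c j).2, (Finset.mem_filter.mp hj).2⟩
  · have hsum := DirectSum.sum_support_of c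
    conv_lhs => rw [← hsum]
    rw [map_sum]
    rw [Finset.sum_filter]
    refine Finset.sum_congr rfl fun j hj => ?_
    rw [DirectSum.coeAddMonoidHom_of]
    by_cases hjA : (j : ℤ) ∈ A
    · rw [if_pos hjA]
    · rw [if_neg hjA]
      have := hc j hjA
      rw [this]
      simp

theorem KLRing.window_conj (K : KLRing R) {A : Set ℤ} {r : R} (hr : r ∈ K.window A) :
    K.conj r ∈ K.window {m | ∃ j ∈ A, m = -j} := by
  obtain ⟨s, f, hf, rfl⟩ := K.window_sum_decomp hr
  rw [map_sum]
  exact AddSubgroup.sum_mem _ fun j hj =>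
    K.mem_window_of_grade (A := {m | ∃ j ∈ A, m = -j}) ⟨j, (hf j hj).2, rfl⟩
      (K.conj_grade j _ (hf j hj).1)

theorem KLRing.window_mul (K : KLRing R) {A : Set ℤ} {r : R} (hr : r ∈ K.window A)
    {i : ℤ} {x : R} (hx : x ∈ K.grade i) :
    x * r ∈ K.window {m | ∃ j ∈ A, m = i + j} := by
  obtain ⟨s, f, hf, rfl⟩ := K.window_sum_decomp hr
  rw [Finset.mul_sum]
  exact AddSubgroup.sum_mem _ fun j hj =>
    K.mem_window_of_grade (A := {m | ∃ j ∈ A, m = i + j}) ⟨j, (hf j hj).2, rfl⟩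
      (K.grade_mul i j _ _ hx (hf j hj).1)

theorem KLRing.window_disjoint (K : KLRing R) {A A' : Set ℤ}
    (h : ∀ m, m ∈ A → m ∈ A' → False) {r : R}
    (h1 : r ∈ K.window A) (h2 : r ∈ K.window A') : r = 0 := by
  obtain ⟨c, hΦ, hc⟩ := h1
  obtain ⟨c', hΦ', hc'⟩ := h2
  have hcc : c = c' := K.decomp.injective (by rw [hΦ, hΦ'])
  have hz : c = 0 := by
    apply DFinsupp.ext
    intro j
    by_cases hjA : j ∈ A
    · have : j ∉ A' := fun hj' => h j hjA hj'
      rw [hcc, hc' j this]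
      rfl
    · rw [hc j hjA]
      rfl
  rw [← hΦ, hz, map_zero]

theorem KLRing.gradeSum_le_window (K : KLRing R) (n : ℕ) :
    K.gradeSum n ≤ K.window {m | 0 ≤ m ∧ m < n} := by
  refine iSup₂_le fun i hi => ?_
  intro r hr
  exact K.mem_window_of_grade (A := {m : ℤ | 0 ≤ m ∧ m < (n : ℤ)})
    ⟨Int.ofNat_nonneg i, by exact_mod_cast Finset.mem_range.mp hi⟩ hr

/-- The key grading lemma: an element of `R_0 + ⋯ + R_{n-1}` with
`conj d = qinv^n d` is zero. -/
theorem KLRing.grading_zero (K : KLRing R) (n : ℕ) (d : R)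
    (hd : d ∈ K.gradeSum n) (h : K.conj d = K.qinv ^ n * d) : d = 0 := by
  have h1 : d ∈ K.window {m | 0 ≤ m ∧ m < n} := K.gradeSum_le_window n hd
  have h2 := K.window_conj h1
  rw [h] at h2
  have h3 := K.window_mul h1 (K.qinv_pow_mem n)
  have h4 : K.conj d = 0 := by
    rw [h]
    refine K.window_disjoint (A := {m | ∃ j ∈ {m : ℤ | 0 ≤ m ∧ m < (n : ℤ)}, m = -j})
      (A' := {m | ∃ j ∈ {m : ℤ | 0 ≤ m ∧ m < (n : ℤ)}, m = -2 * (n : ℤ) + j}) ?_ h2 h3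
    rintro m ⟨j, ⟨hj0, hjn⟩, rfl⟩ ⟨j', ⟨hj0', hjn'⟩, heq⟩
    omega
  have := congrArg K.conj h4
  rwa [K.conj_conj, map_zero] at this

/-! #### Hecke algebra lemmas -/

variable (K : KLRing R) (Hk : Hecke cs R K.q)

theorem Hecke.T_one' : Hk.T 1 = 1 := by
  have hmul : LinearMap.mulLeft R (Hk.T 1) = LinearMap.id := by
    refine Hk.basis.ext fun v => ?_
    rw [Hk.basis_eq, LinearMap.mulLeft_apply, LinearMap.id_apply,
      Hk.T_mul 1 v (by rw [one_mul, cs.length_one, zero_add]), one_mul]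
  have := LinearMap.congr_fun hmul (1 : Hk.carrier)
  simpa using this

theorem Hecke.Tsq (i : B) :
    Hk.T (cs.simple i) * Hk.T (cs.simple i) =
      K.q • Hk.T (cs.simple i) + K.q • 1 - Hk.T (cs.simple i) := by
  have h := Hk.T_quad i
  rw [Algebra.algebraMap_eq_smul_one] at h
  have h2 : Hk.T (cs.simple i) * Hk.T (cs.simple i) - K.q • Hk.T (cs.simple i)
      + Hk.T (cs.simple i) - K.q • (1 : Hk.carrier) = 0 := by
    rw [← h, mul_sub, add_mul, one_mul, mul_smul_comm, mul_one, smul_add]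
    abel
  apply eq_of_sub_eq_zero
  rw [← h2]
  abel

/-- Explicit inverse of `T_s`. -/
noncomputable def Hecke.invs (i : B) : Hk.carrier :=
  K.qinv • Hk.T (cs.simple i) + K.qinv • (1 : Hk.carrier) - 1

theorem Hecke.qinv_q : K.qinv * K.q = 1 := by rw [mul_comm]; exact K.q_qinv

theorem Hecke.Ts_mul_invs (i : B) : Hk.T (cs.simple i) * Hecke.invs K Hk i = 1 := by
  rw [Hecke.invs, mul_sub, mul_add, mul_smul_comm, mul_smul_comm, mul_one,
    Hecke.Tsq K Hk i]
  rw [smul_sub, smul_add, smul_smul, smul_smul, Hecke.qinv_q K, one_smul, one_smul]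
  abel

theorem Hecke.invs_mul_Ts (i : B) : Hecke.invs K Hk i * Hk.T (cs.simple i) = 1 := by
  rw [Hecke.invs, sub_mul, add_mul, smul_mul_assoc, smul_mul_assoc, one_mul,
    Hecke.Tsq K Hk i]
  rw [smul_sub, smul_add, smul_smul, smul_smul, Hecke.qinv_q K, one_smul, one_smul]
  abel

/-- The unit `T_s`. -/
noncomputable def Hecke.TsUnit (i : B) : Hk.carrierˣ :=
  ⟨Hk.T (cs.simple i), Hecke.invs K Hk i, Hecke.Ts_mul_invs K Hk i, Hecke.invs_mul_Ts K Hk i⟩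

theorem Hecke.Ts_isUnit (i : B) : IsUnit (Hk.T (cs.simple i)) :=
  ⟨Hecke.TsUnit K Hk i, rfl⟩

theorem Hecke.ringInverse_Ts (i : B) :
    Ring.inverse (Hk.T (cs.simple i)) =
      K.qinv • Hk.T (cs.simple i) + K.qinv • (1 : Hk.carrier) - 1 :=
  Ring.inverse_unit (Hecke.TsUnit K Hk i)

theorem Hecke.T_isUnit : ∀ z : W, IsUnit (Hk.T z) := by
  intro z
  generalize hn : cs.length z = n
  induction n using Nat.strong_induction_on generalizing z with
  | _ n ih =>
    cases n with
    | zero =>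
      have hz : z = 1 := cs.length_eq_zero_iff.mp hn
      rw [hz, Hecke.T_one' K Hk]
      exact isUnit_one
    | succ m =>
      obtain ⟨ω, hlen, hw⟩ := cs.exists_reduced_word z
      cases ω with
      | nil => rw [hw, cs.wordProd_nil, cs.length_one] at hn; exact absurd hn (by omega)
      | cons i ω' =>
        have hv : cs.length (cs.wordProd ω') = m := by
          have h1 := cs.length_wordProd_le ω'
          have h2 : cs.length (cs.wordProd (i :: ω'))
              ≤ 1 + cs.length (cs.wordProd ω') := by
            rw [cs.wordProd_cons]
            have := cs.length_mul_le (cs.simple i) (cs.wordProd ω')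
            rw [cs.length_simple] at this
            exact this
          rw [← hw] at h2
          replace hlen : (i :: ω').length = cs.length z := by rw [hw]; exact hlen.symm
          simp only [List.length_cons] at hlen
          rw [hn] at hlen
          omega
        have hTz : Hk.T z = Hk.T (cs.simple i) * Hk.T (cs.wordProd ω') := by
          rw [hw, cs.wordProd_cons]
          rw [Hk.T_mul (cs.simple i) (cs.wordProd ω')
            (by rw [← cs.wordProd_cons, ← hw, hn, cs.length_simple, hv]; omega)]
        rw [hTz]
        exact (Hecke.Ts_isUnit K Hk i).mul (ih m (by omega) _ hv)

theorem ringInverse_mul {A : Type*} [Ring A] {a b : A} (ha : IsUnit a) (hb : IsUnit b) :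
    Ring.inverse (a * b) = Ring.inverse b * Ring.inverse a := by
  obtain ⟨ua, rfl⟩ := ha
  obtain ⟨ub, rfl⟩ := hb
  rw [← Units.val_mul, Ring.inverse_unit, Ring.inverse_unit, Ring.inverse_unit,
    mul_inv_rev, Units.val_mul]

/-- The span of `{T_z : ℓ(z) < n}`. -/
noncomputable def Hecke.EL (n : ℕ) : Submodule R Hk.carrier :=
  Submodule.span R {h | ∃ z : W, cs.length z < n ∧ h = Hk.T z}

theorem Hecke.EL_mono {m n : ℕ} (h : m ≤ n) : Hecke.EL (cs := cs) K Hk m ≤ Hecke.EL K Hk n :=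
  Submodule.span_mono fun x ⟨z, hz, hx⟩ => ⟨z, by omega, hx⟩

theorem Hecke.T_mem_EL {z : W} {n : ℕ} (h : cs.length z < n) :
    Hk.T z ∈ Hecke.EL (cs := cs) K Hk n :=
  Submodule.subset_span ⟨z, h, rfl⟩

theorem Hecke.Ts_mul_EL (i : B) {m : ℕ} {e : Hk.carrier}
    (he : e ∈ Hecke.EL (cs := cs) K Hk m) :
    Hk.T (cs.simple i) * e ∈ Hecke.EL (cs := cs) K Hk (m + 1) := by
  induction he using Submodule.span_induction with
  | mem x hx =>
    obtain ⟨z, hz, rfl⟩ := hx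
    rcases cs.length_simple_mul z i with hcase | hcase
    · rw [Hk.T_mul (cs.simple i) z (by rw [cs.length_simple]; omega)]
      exact Hecke.T_mem_EL K Hk (by omega)
    · have hzlen : cs.length z ≥ 1 := by
        have := cs.length_simple_mul_ne z i
        omega
      have hz' : z = cs.simple i * (cs.simple i * z) := by
        rw [← mul_assoc, cs.simple_mul_simple_self, one_mul]
      have hTz : Hk.T z = Hk.T (cs.simple i) * Hk.T (cs.simple i * z) := by
        conv_lhs => rw [hz']
        rw [Hk.T_mul (cs.simple i) (cs.simple i * z)
          (by rw [cs.length_simple, ← hz']; omega)]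
      have hcomp : Hk.T (cs.simple i) * Hk.T z =
          K.q • Hk.T z + K.q • Hk.T (cs.simple i * z) - Hk.T z := by
        calc Hk.T (cs.simple i) * Hk.T z
            = (Hk.T (cs.simple i) * Hk.T (cs.simple i)) * Hk.T (cs.simple i * z) := by
              rw [mul_assoc, ← hTz]
          _ = K.q • (Hk.T (cs.simple i) * Hk.T (cs.simple i * z))
              + K.q • Hk.T (cs.simple i * z)
              - Hk.T (cs.simple i) * Hk.T (cs.simple i * z) := by
              rw [Hecke.Tsq K Hk i, sub_mul, add_mul, smul_mul_assoc, smul_mul_assoc,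
                one_mul]
          _ = K.q • Hk.T z + K.q • Hk.T (cs.simple i * z) - Hk.T z := by rw [← hTz]
      rw [hcomp]
      refine sub_mem (add_mem ?_ ?_) ?_
      · exact Submodule.smul_mem _ _ (Hecke.T_mem_EL K Hk (by omega))
      · exact Submodule.smul_mem _ _ (Hecke.T_mem_EL K Hk (by omega))
      · exact Hecke.T_mem_EL K Hk (by omega)
  | zero => rw [mul_zero]; exact zero_mem _
  | add x y hx hy ihx ihy => rw [mul_add]; exact add_mem ihx ihy
  | smul a x hx ihx => rw [mul_smul_comm]; exact Submodule.smul_mem _ _ ihx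

/-- Triangularity of the inverse: `(T_{u⁻¹})⁻¹ = q⁻ℓ(u) T_u + (lower terms)`. -/
theorem Hecke.ringInverse_T (u : W) :
    Ring.inverse (Hk.T u⁻¹) - K.qinv ^ cs.length u • Hk.T u
      ∈ Hecke.EL (cs := cs) K Hk (cs.length u) := by
  generalize hn : cs.length u = n
  induction n using Nat.strong_induction_on generalizing u with
  | _ n ih =>
    cases n with
    | zero =>
      have hu : u = 1 := cs.length_eq_zero_iff.mp hn
      rw [hu, inv_one, Hecke.T_one' K Hk, Ring.inverse_one, pow_zero, one_smul, sub_self]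
      exact zero_mem _
    | succ m =>
      obtain ⟨ω, hlen, hw⟩ := cs.exists_reduced_word u
      cases ω with
      | nil => rw [hw, cs.wordProd_nil, cs.length_one] at hn; exact absurd hn (by omega)
      | cons i ω' =>
        set v := cs.wordProd ω' with hvdef
        have hlen' : (i :: ω').length = m + 1 := by rw [← hlen, ← hw, hn]
        have hv : cs.length v = m := by
          have h1 := cs.length_wordProd_le ω'
          rw [← hvdef] at h1
          have h2 : cs.length (cs.wordProd (i :: ω')) ≤ 1 + cs.length v := by
            rw [cs.wordProd_cons]
            have := cs.length_mul_le (cs.simple i) v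
            rw [cs.length_simple] at this
            exact this
          rw [← hw, hn] at h2
          simp only [List.length_cons] at hlen'
          omega
        have huv : u = cs.simple i * v := by rw [hw, cs.wordProd_cons, hvdef]
        have hTsv : Hk.T (cs.simple i) * Hk.T v = Hk.T u := by
          rw [Hk.T_mul (cs.simple i) v (by rw [cs.length_simple, ← huv, hn, hv]; omega), ← huv]
        have hTinv : Hk.T u⁻¹ = Hk.T v⁻¹ * Hk.T (cs.simple i) := by
          rw [Hk.T_mul v⁻¹ (cs.simple i) ?hlen]
          · rw [huv, mul_inv_rev, cs.inv_simple]
          case hlen =>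
            rw [cs.length_simple, cs.length_inv, hv]
            have : v⁻¹ * cs.simple i = u⁻¹ := by rw [huv, mul_inv_rev, cs.inv_simple]
            rw [this, cs.length_inv, hn]
        have ihv := ih m (by omega) v hv
        set X := Ring.inverse (Hk.T v⁻¹) with hXdef
        set e := X - K.qinv ^ m • Hk.T v with hedef
        have hX : X = K.qinv ^ m • Hk.T v + e := by rw [hedef]; abel
        have hinv : Ring.inverse (Hk.T u⁻¹) =
            (K.qinv • Hk.T (cs.simple i) + K.qinv • (1 : Hk.carrier) - 1) * X := by
          rw [hTinv, ringInverse_mul (Hecke.T_isUnit K Hk v⁻¹) (Hecke.Ts_isUnit K Hk i),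
            Hecke.ringInverse_Ts K Hk i]
        have hexp : Ring.inverse (Hk.T u⁻¹) - K.qinv ^ (m + 1) • Hk.T u =
            K.qinv • (Hk.T (cs.simple i) * e)
              + ((K.qinv * K.qinv ^ m) • Hk.T v - K.qinv ^ m • Hk.T v)
              + (K.qinv • e - e) := by
          rw [hinv, sub_mul, add_mul, smul_mul_assoc, smul_mul_assoc, one_mul]
          rw [hX, mul_add, mul_smul_comm, hTsv]
          rw [pow_succ]
          module
        rw [hexp]
        refine add_mem (add_mem ?_ ?_) ?_
        · exact Submodule.smul_mem _ _ (Hecke.Ts_mul_EL K Hk i ihv)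
        · exact sub_mem (Submodule.smul_mem _ _ (Hecke.T_mem_EL K Hk (by omega)))
            (Submodule.smul_mem _ _ (Hecke.T_mem_EL K Hk (by omega)))
        · have hele : e ∈ Hecke.EL (cs := cs) K Hk m := ihv
          exact sub_mem (Submodule.smul_mem _ _ ((Hecke.EL_mono K Hk (by omega)) hele))
            ((Hecke.EL_mono K Hk (by omega)) hele)

/-! #### Induced module lemmas -/

variable {J : Set B} {Mod : Type*} [AddCommGroup Mod] [Module R Mod]
  (φ : Hk.carrier →ₗ[R] Mod)

theorem phi_kernel (hInd : IsInduced Hk J (-1 : R) Mod φ) (h : Hk.carrier) {i : B}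
    (hi : i ∈ J) : φ (h * (Hk.T (cs.simple i) + 1)) = 0 := by
  have hmem : h * (Hk.T (cs.simple i) + 1) ∈ LinearMap.ker φ := by
    rw [hInd.2]
    exact Submodule.subset_span ⟨h, i, hi, by rw [map_neg, map_one, sub_neg_eq_add]⟩
  exact LinearMap.mem_ker.mp hmem

theorem phi_ascent (hInd : IsInduced Hk J (-1 : R) Mod φ) {z : W} {i : B} (hi : i ∈ J)
    (hlen : cs.length (z * cs.simple i) = cs.length z + 1) :
    φ (Hk.T (z * cs.simple i)) = - φ (Hk.T z) := by
  have hmul := Hk.T_mul z (cs.simple i) (by rw [cs.length_simple]; omega)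
  have h0 := phi_kernel K Hk φ hInd (Hk.T z) hi
  rw [mul_add, mul_one, map_add, hmul] at h0
  exact eq_neg_of_add_eq_zero_left h0

theorem phi_T_mul_simple (hInd : IsInduced Hk J (-1 : R) Mod φ) (z : W) {i : B}
    (hi : i ∈ J) : φ (Hk.T (z * cs.simple i)) = - φ (Hk.T z) := by
  rcases cs.length_mul_simple z i with hcase | hcase
  · exact phi_ascent K Hk φ hInd hi hcase
  · have hz : z = (z * cs.simple i) * cs.simple i := by
      rw [mul_assoc, cs.simple_mul_simple_self, mul_one]
    have hlen : cs.length ((z * cs.simple i) * cs.simple i)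
        = cs.length (z * cs.simple i) + 1 := by rw [← hz]; omega
    have := phi_ascent K Hk φ hInd hi hlen
    rw [← hz] at this
    rw [this, neg_neg]

theorem phi_T_mul_wordProd (hInd : IsInduced Hk J (-1 : R) Mod φ) (v : W) (ω : List B)
    (hω : ∀ i ∈ ω, i ∈ J) :
    φ (Hk.T (v * cs.wordProd ω)) = ((-1 : R)) ^ ω.length • φ (Hk.T v) := by
  induction ω using List.reverseRecOn with
  | nil => rw [cs.wordProd_nil, mul_one, List.length_nil, pow_zero, one_smul]
  | append_singleton ω' i ih =>
    have hi : i ∈ J := hω i (by simp)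
    rw [cs.wordProd_append, cs.wordProd_singleton, ← mul_assoc,
      phi_T_mul_simple K Hk φ hInd _ hi, ih (fun j hj => hω j (by simp [hj]))]
    rw [List.length_append, List.length_singleton, pow_succ, mul_smul, neg_one_smul,
      smul_neg]

variable (b : Module.Basis (minReps cs J) R Mod)

theorem rep_unique (hInd : IsInduced Hk J (-1 : R) Mod φ)
    (hb : ∀ u : minReps cs J, b u = φ (Hk.T u.1)) {z : W} (u₁ u₂ : minReps cs J)
    (h1 : u₁.1⁻¹ * z ∈ WJ cs J) (h2 : u₂.1⁻¹ * z ∈ WJ cs J) : u₁ = u₂ := by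
  by_contra hne
  have hx : u₁.1⁻¹ * u₂.1 ∈ WJ cs J := by
    have heq : u₁.1⁻¹ * u₂.1 = (u₁.1⁻¹ * z) * (u₂.1⁻¹ * z)⁻¹ := by group
    rw [heq]
    exact mul_mem h1 (inv_mem h2)
  obtain ⟨ω, hω, hωeq⟩ := WJ_word hx
  have heq2 : u₂.1 = u₁.1 * cs.wordProd ω := by rw [← hωeq]; group
  have hφ := phi_T_mul_wordProd K Hk φ hInd u₁.1 ω hω
  rw [← heq2, ← hb, ← hb] at hφ
  have hcoord := congrArg (fun m => b.repr m u₂) hφ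
  simp only [map_smul, Finsupp.smul_apply, b.repr_self, smul_eq_mul] at hcoord
  rw [Finsupp.single_apply, if_pos rfl, Finsupp.single_apply, if_neg hne, mul_zero]
    at hcoord
  exact K.one_ne_zero' hcoord

/-- Decomposition data for `φ(T_z)`. -/
theorem exists_psi (hInd : IsInduced Hk J (-1 : R) Mod φ)
    (hb : ∀ u : minReps cs J, b u = φ (Hk.T u.1)) (z : W) :
    ∃ (u : minReps cs J) (ω : List B), (∀ i ∈ ω, i ∈ J) ∧ z = u.1 * cs.wordProd ω ∧
      cs.length z = cs.length u.1 + ω.length ∧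
      φ (Hk.T z) = ((-1 : R)) ^ ω.length • b u ∧ bruhatLE cs u.1 z := by
  obtain ⟨u, ω, humem, hωJ, hzeq, hlen⟩ := exists_decomp cs J z
  refine ⟨⟨u, humem⟩, ω, hωJ, hzeq, hlen, ?_, ?_⟩
  · rw [hzeq, phi_T_mul_wordProd K Hk φ hInd u ω hωJ, hb]
  · rw [hzeq] at hlen ⊢
    exact chain_bruhatLE cs u ω hlen

theorem repr_phi_T (hInd : IsInduced Hk J (-1 : R) Mod φ)
    (hb : ∀ u : minReps cs J, b u = φ (Hk.T u.1)) (z : W) (u : minReps cs J) :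
    b.repr (φ (Hk.T z)) u =
      if u.1⁻¹ * z ∈ WJ cs J then ((-1 : R)) ^ cs.length (u.1⁻¹ * z) else 0 := by
  obtain ⟨u₀, ω, hωJ, hzeq, hlen, hφ, _⟩ := exists_psi K Hk φ b hInd hb z
  have hu₀z : u₀.1⁻¹ * z ∈ WJ cs J := by
    have : u₀.1⁻¹ * z = cs.wordProd ω := by rw [hzeq]; group
    rw [this]
    exact wordProd_mem_WJ hωJ
  rw [hφ, map_smul, Finsupp.smul_apply, b.repr_self, smul_eq_mul, Finsupp.single_apply]
  by_cases hc : u.1⁻¹ * z ∈ WJ cs J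
  · have hu : u₀ = u := rep_unique K Hk φ b hInd hb u₀ u hu₀z hc
    rw [if_pos hu, mul_one, if_pos hc]
    have hword : u.1⁻¹ * z = cs.wordProd ω := by rw [hzeq, ← hu]; group
    rw [hword, neg_one_pow_length_wordProd]
  · have hu : u₀ ≠ u := fun h => hc (h ▸ hu₀z)
    rw [if_neg hu, mul_zero, if_neg hc]

/-- Coefficients of `φ(h)` in the basis `b`. -/
theorem repr_phi (hInd : IsInduced Hk J (-1 : R) Mod φ)
    (hb : ∀ u : minReps cs J, b u = φ (Hk.T u.1)) (h : Hk.carrier) (u : minReps cs J) :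
    b.repr (φ h) u = ∑ z ∈ (Hk.basis.repr h).support,
      (if u.1⁻¹ * z ∈ WJ cs J then
        ((-1 : R)) ^ cs.length (u.1⁻¹ * z) * (Hk.basis.repr h) z else 0) := by
  have hsum : φ h = ∑ z ∈ (Hk.basis.repr h).support, (Hk.basis.repr h) z • φ (Hk.T z) := by
    conv_lhs => rw [← Hk.basis.linearCombination_repr h, Finsupp.linearCombination_apply]
    rw [map_finsuppSum]
    show ∑ z ∈ (Hk.basis.repr h).support, φ ((Hk.basis.repr h) z • Hk.basis z) = _
    exact Finset.sum_congr rfl fun z _ => by rw [map_smul, Hk.basis_eq]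
  rw [hsum, map_sum, Finsupp.finset_sum_apply]
  refine Finset.sum_congr rfl fun z _ => ?_
  rw [map_smul, Finsupp.smul_apply, smul_eq_mul, repr_phi_T K Hk φ b hInd hb z u]
  split_ifs with hc
  · rw [mul_comm]
  · rw [mul_zero]

/-- Coordinates of `φ` of low-degree elements vanish on long minimal reps. -/
theorem repr_phi_EL (hInd : IsInduced Hk J (-1 : R) Mod φ)
    (hb : ∀ u : minReps cs J, b u = φ (Hk.T u.1)) (N : ℕ) {e : Hk.carrier}
    (he : e ∈ Hecke.EL (cs := cs) K Hk N) (u : minReps cs J)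
    (hu : N ≤ cs.length u.1) : b.repr (φ e) u = 0 := by
  have hle : Hecke.EL (cs := cs) K Hk N ≤ LinearMap.ker ((b.coord u).comp φ) := by
    rw [Hecke.EL]
    refine Submodule.span_le.mpr ?_
    rintro x ⟨z, hz, rfl⟩
    simp only [SetLike.mem_coe, LinearMap.mem_ker, LinearMap.coe_comp, Function.comp_apply,
      Module.Basis.coord_apply]
    obtain ⟨u₀, ω, _, _, hlen, hφ, _⟩ := exists_psi K Hk φ b hInd hb z
    rw [hφ, map_smul, Finsupp.smul_apply, b.repr_self, smul_eq_mul, Finsupp.single_apply,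
      if_neg, mul_zero]
    intro hequ
    have : cs.length u.1 ≤ cs.length z := by rw [← hequ]; omega
    omega
  have := hle he
  simpa only [LinearMap.mem_ker, LinearMap.coe_comp, Function.comp_apply,
    Module.Basis.coord_apply] using this

end Aux

/-- Deodhar: for `w, y ∈ W^J` with `y ≤ w`,
`P^{J,-1}_{y,w} = Σ_{x ∈ W_J, yx ≤ w} (-1)^{ℓ(x)} P_{yx,w}`,
where `P` are the ordinary Kazhdan–Lusztig polynomials of `(W,S)`
(given as `P_{y,w} = Hk.basis.repr (C w) y`) and `P^{J,-1}` the parabolic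
Kazhdan–Lusztig polynomials for `a = -1` (given as `P^{J,-1}_{y,w} = b.repr (CJ w) y`). -/
theorem statement11 (K : KLRing R) (J : Set B) (Hk : Hecke cs R K.q)
    (bar : Hk.carrier →+* Hk.carrier) (hbar : IsBar K Hk bar)
    (C : W → Hk.carrier) (hC : ∀ w : W, IsKLElt K Hk bar w (C w))
    (Mod : Type*) [AddCommGroup Mod] [Module R Mod]
    (φ : Hk.carrier →ₗ[R] Mod) (hInd : IsInduced Hk J (-1 : R) Mod φ)
    (b : Module.Basis (minReps cs J) R Mod) (hb : ∀ u : minReps cs J, b u = φ (Hk.T u.1))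
    (barJ : Mod →+ Mod) (hbarJ : ∀ h : Hk.carrier, barJ (φ h) = φ (bar h))
    (CJ : minReps cs J → Mod) (hCJ : ∀ u : minReps cs J, IsKLEltJ K b barJ u (CJ u))
    (w y : minReps cs J) (hyw : bruhatLE cs y.1 w.1) :
    b.repr (CJ w) y =
      ∑ᶠ x ∈ {x : W | x ∈ WJ cs J ∧ bruhatLE cs (y.1 * x) w.1},
        (-1 : R) ^ cs.length x * Hk.basis.repr (C w.1) (y.1 * x) := by
  classical
  have hone : (1 : R) ≠ 0 := K.one_ne_zero'
  set T : Finset W := (Hk.basis.repr (C w.1)).support with hT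
  have hCL : ∀ u : minReps cs J, b.repr (φ (C w.1)) u = ∑ z ∈ T,
      (if u.1⁻¹ * z ∈ WJ cs J then
        ((-1 : R)) ^ cs.length (u.1⁻¹ * z) * (Hk.basis.repr (C w.1)) z else 0) :=
    fun u => repr_phi K Hk φ b hInd hb (C w.1) u
  have hTz : ∀ z ∈ T, bruhatLE cs z w.1 := fun z hz =>
    (hC w.1).2.1 z (Finsupp.mem_support_iff.mp hz)
  have hcond : ∀ (u : minReps cs J) (z : W), u.1⁻¹ * z ∈ WJ cs J →
      bruhatLE cs u.1 z ∧ cs.length u.1 ≤ cs.length z := by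
    intro u z hc
    obtain ⟨u₀, ω, hωJ, hzeq, hlen, _, hbr⟩ := exists_psi K Hk φ b hInd hb z
    have hu₀z : u₀.1⁻¹ * z ∈ WJ cs J := by
      have h0 : u₀.1⁻¹ * z = cs.wordProd ω := by rw [hzeq]; group
      rw [h0]; exact wordProd_mem_WJ hωJ
    have hu : u₀ = u := rep_unique K Hk φ b hInd hb u₀ u hu₀z hc
    subst hu
    exact ⟨hbr, by omega⟩
  have hzeqw : ∀ (u : minReps cs J) (z : W), u.1⁻¹ * z ∈ WJ cs J → z = w.1 → u = w := by
    intro u z hc hzw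
    subst hzw
    refine rep_unique K Hk φ b hInd hb u w hc ?_
    have h1 : w.1⁻¹ * w.1 = 1 := by group
    rw [h1]; exact one_mem _
  have hwT : ∀ z ∈ T, w.1⁻¹ * z ∈ WJ cs J → z = w.1 := by
    intro z hz hc
    obtain ⟨u₀, ω, hωJ, hzeq, hlen, _, _⟩ := exists_psi K Hk φ b hInd hb z
    have hu₀z : u₀.1⁻¹ * z = cs.wordProd ω := by rw [hzeq]; group
    have hu : u₀ = w := rep_unique K Hk φ b hInd hb u₀ w
      (by rw [hu₀z]; exact wordProd_mem_WJ hωJ) hc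
    have hlenle := bruhatLE_length (hTz z hz)
    rw [hu] at hlen
    have hω0 : ω.length = 0 := by omega
    rw [hzeq, hu, List.length_eq_zero_iff.mp hω0, cs.wordProd_nil, mul_one]
  have hwmemT : w.1 ∈ T := Finsupp.mem_support_iff.mpr (by rw [(hC w.1).1]; exact hone)
  have hccw : b.repr (φ (C w.1)) w = 1 := by
    rw [hCL w, Finset.sum_eq_single w.1]
    · rw [if_pos (by rw [(by group : w.1⁻¹ * w.1 = 1)]; exact one_mem _)]
      rw [(by group : w.1⁻¹ * w.1 = 1), cs.length_one, pow_zero, one_mul, (hC w.1).1]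
    · intro z hz hne
      rw [if_neg fun hc => hne (hwT z hz hc)]
    · intro habs; exact absurd hwmemT habs
  have hccle : ∀ u : minReps cs J, b.repr (φ (C w.1)) u ≠ 0 → bruhatLE cs u.1 w.1 := by
    intro u hne
    rw [hCL u] at hne
    obtain ⟨z, hzT, hznz⟩ := Finset.exists_ne_zero_of_sum_ne_zero hne
    by_cases hc : u.1⁻¹ * z ∈ WJ cs J
    · exact Relation.ReflTransGen.trans (hcond u z hc).1 (hTz z hzT)
    · rw [if_neg hc] at hznz; exact absurd rfl hznz
  have hccb : ∀ u : minReps cs J, bruhatLE cs u.1 w.1 → u ≠ w →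
      b.repr (φ (C w.1)) u ∈ K.gradeSum (cs.length w.1 - cs.length u.1) := by
    intro u hu hneq
    rw [hCL u]
    refine AddSubgroup.sum_mem _ fun z hz => ?_
    by_cases hc : u.1⁻¹ * z ∈ WJ cs J
    · rw [if_pos hc]
      have hzw : z ≠ w.1 := fun h => hneq (hzeqw u z hc h)
      have hP := (hC w.1).2.2.1 z (hTz z hz) hzw
      have hle := K.gradeSum_mono (Nat.sub_le_sub_left (hcond u z hc).2 (cs.length w.1))
      rcases Nat.even_or_odd (cs.length (u.1⁻¹ * z)) with he | ho
      · rw [he.neg_one_pow, one_mul]; exact hle hP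
      · rw [ho.neg_one_pow, neg_one_mul]; exact neg_mem (hle hP)
    · rw [if_neg hc]; exact zero_mem _
  -- Step 1: the parabolic KL element coincides with `φ (C w)`.
  have hrDval : ∀ u : minReps cs J, b.repr (CJ w - φ (C w.1)) u
      = b.repr (CJ w) u - b.repr (φ (C w.1)) u := fun u => by
    rw [map_sub, Finsupp.sub_apply]
  have hall : ∀ u : minReps cs J, b.repr (CJ w - φ (C w.1)) u = 0 := by
    by_contra hcon
    push_neg at hcon
    obtain ⟨u₀, hu₀⟩ := hcon
    set D := CJ w - φ (C w.1) with hD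
    have hDne : (b.repr D).support.Nonempty := ⟨u₀, Finsupp.mem_support_iff.mpr hu₀⟩
    obtain ⟨y₀, hy₀mem, hy₀max⟩ := Finset.exists_max_image (b.repr D).support
      (fun u => cs.length u.1) hDne
    have hy₀ne : b.repr D y₀ ≠ 0 := Finsupp.mem_support_iff.mp hy₀mem
    have hsupw : ∀ u ∈ (b.repr D).support, bruhatLE cs u.1 w.1 := by
      intro u hu
      have hne := Finsupp.mem_support_iff.mp hu
      rw [hrDval u] at hne
      by_cases h1 : b.repr (CJ w) u = 0
      · refine hccle u fun h2 => hne ?_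
        rw [h1, h2, sub_zero]
      · exact (hCJ w).2.1 u h1
    have hyw₀ : bruhatLE cs y₀.1 w.1 := hsupw y₀ hy₀mem
    have hy₀w : y₀ ≠ w := by
      intro heq
      apply hy₀ne
      rw [hrDval, heq, (hCJ w).1, hccw, sub_self]
    have hlt : cs.length y₀.1 < cs.length w.1 :=
      bruhatLE_length_lt hyw₀ fun h => hy₀w (Subtype.ext h)
    have hbarD : barJ D = K.qinv ^ cs.length w.1 • D := by
      rw [hD, map_sub, (hCJ w).2.2.2, hbarJ, (hC w.1).2.2.2, map_smul, smul_sub]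
    have hDsum : D = ∑ u ∈ (b.repr D).support, (b.repr D) u • b u := by
      conv_lhs => rw [← b.linearCombination_repr D, Finsupp.linearCombination_apply]
      rfl
    have hterm : ∀ u : minReps cs J, cs.length u.1 ≤ cs.length y₀.1 →
        b.repr (barJ ((b.repr D) u • b u)) y₀
          = K.conj ((b.repr D) u) * (K.qinv ^ cs.length u.1 *
              (if u = y₀ then (1 : R) else 0)) := by
      intro u hulen
      have h1 : (b.repr D) u • b u = φ ((b.repr D) u • Hk.T u.1) := by
        rw [map_smul, hb]
      rw [h1, hbarJ, hbar ((b.repr D) u) u.1]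
      have hinv := Hecke.ringInverse_T K Hk u.1
      set e := Ring.inverse (Hk.T u.1⁻¹) - K.qinv ^ cs.length u.1 • Hk.T u.1 with hedef
      have heq : Ring.inverse (Hk.T u.1⁻¹) = K.qinv ^ cs.length u.1 • Hk.T u.1 + e := by
        rw [hedef]; abel
      rw [heq, smul_add]
      simp only [map_add, map_smul, Finsupp.add_apply, Finsupp.smul_apply, smul_eq_mul]
      rw [repr_phi_EL K Hk φ b hInd hb (cs.length u.1) hinv y₀ hulen, mul_zero, add_zero]
      rw [← hb u, b.repr_self, Finsupp.single_apply]
    have hLHS : b.repr (barJ D) y₀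
        = K.conj ((b.repr D) y₀) * K.qinv ^ cs.length y₀.1 := by
      calc b.repr (barJ D) y₀
          = ∑ u ∈ (b.repr D).support, b.repr (barJ ((b.repr D) u • b u)) y₀ := by
            conv_lhs => rw [hDsum]
            rw [map_sum, map_sum, Finsupp.finset_sum_apply]
        _ = ∑ u ∈ (b.repr D).support, K.conj ((b.repr D) u) * (K.qinv ^ cs.length u.1 *
              (if u = y₀ then (1 : R) else 0)) :=
            Finset.sum_congr rfl fun u hu => hterm u (hy₀max u hu)
        _ = K.conj ((b.repr D) y₀) * K.qinv ^ cs.length y₀.1 := by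
            rw [Finset.sum_eq_single y₀]
            · rw [if_pos rfl, mul_one]
            · intro u _ hne
              rw [if_neg hne, mul_zero, mul_zero]
            · intro habs; exact absurd hy₀mem habs
    have hkey : K.conj ((b.repr D) y₀) * K.qinv ^ cs.length y₀.1
        = K.qinv ^ cs.length w.1 * (b.repr D) y₀ := by
      rw [← hLHS, hbarD, map_smul, Finsupp.smul_apply, smul_eq_mul]
    have hmem : (b.repr D) y₀ ∈ K.gradeSum (cs.length w.1 - cs.length y₀.1) := by
      rw [hrDval]
      exact sub_mem ((hCJ w).2.2.1 y₀ hyw₀ hy₀w) (hccb y₀ hyw₀ hy₀w)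
    have hqq : K.q ^ cs.length y₀.1 * K.qinv ^ cs.length y₀.1 = 1 := by
      rw [← mul_pow, K.q_qinv, one_pow]
    have hsplit : K.qinv ^ cs.length w.1
        = K.qinv ^ cs.length y₀.1 * K.qinv ^ (cs.length w.1 - cs.length y₀.1) := by
      rw [← pow_add]
      congr 1
      omega
    have hconj : K.conj ((b.repr D) y₀)
        = K.qinv ^ (cs.length w.1 - cs.length y₀.1) * (b.repr D) y₀ := by
      calc K.conj ((b.repr D) y₀)
          = (K.q ^ cs.length y₀.1 * K.qinv ^ cs.length y₀.1) * K.conj ((b.repr D) y₀) := by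
            rw [hqq, one_mul]
        _ = K.q ^ cs.length y₀.1 * (K.conj ((b.repr D) y₀) * K.qinv ^ cs.length y₀.1) := by
            ring
        _ = K.q ^ cs.length y₀.1 * (K.qinv ^ cs.length w.1 * (b.repr D) y₀) := by rw [hkey]
        _ = (K.q ^ cs.length y₀.1 * K.qinv ^ cs.length y₀.1)
              * (K.qinv ^ (cs.length w.1 - cs.length y₀.1) * (b.repr D) y₀) := by
            rw [hsplit]; ring
        _ = K.qinv ^ (cs.length w.1 - cs.length y₀.1) * (b.repr D) y₀ := by
            rw [hqq, one_mul]
    exact hy₀ne (K.grading_zero _ _ hmem hconj)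
  have hstep1 : b.repr (CJ w) y = b.repr (φ (C w.1)) y := by
    have h0 := hall y
    rw [hrDval y] at h0
    exact sub_eq_zero.mp h0
  -- Step 2: rewrite the sum as a finsum.
  rw [hstep1, hCL y]
  set S : Set W := {x : W | x ∈ WJ cs J ∧ bruhatLE cs (y.1 * x) w.1} with hS
  set g : W → R := fun x => (-1 : R) ^ cs.length x * Hk.basis.repr (C w.1) (y.1 * x)
    with hg
  show _ = ∑ᶠ x ∈ S, g x
  have hsub : Function.support (S.indicator g) ⊆ ↑(T.image (fun z => y.1⁻¹ * z)) := by
    intro x hx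
    have hxS : x ∈ S := by
      by_contra hxS
      exact hx (Set.indicator_of_notMem hxS g)
    have hgx : g x ≠ 0 := fun h0 => hx (by rw [Set.indicator_of_mem hxS, h0])
    have hPz : Hk.basis.repr (C w.1) (y.1 * x) ≠ 0 := by
      intro h0
      refine hgx ?_
      rw [hg]
      simp only []
      rw [h0, mul_zero]
    exact Finset.mem_coe.mpr (Finset.mem_image.mpr
      ⟨y.1 * x, Finsupp.mem_support_iff.mpr hPz, by group⟩)
  have h1 : ∑ᶠ x ∈ S, g x = ∑ x ∈ T.image (fun z => y.1⁻¹ * z), S.indicator g x := by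
    rw [finsum_mem_def]
    exact finsum_eq_finset_sum_of_support_subset _ hsub
  have h2 : ∑ x ∈ T.image (fun z => y.1⁻¹ * z), S.indicator g x
      = ∑ z ∈ T, S.indicator g (y.1⁻¹ * z) :=
    Finset.sum_image (fun z1 _ z2 _ h => by exact mul_left_cancel h)
  have h3 : ∀ z ∈ T, S.indicator g (y.1⁻¹ * z) =
      (if y.1⁻¹ * z ∈ WJ cs J then
        (-1 : R) ^ cs.length (y.1⁻¹ * z) * Hk.basis.repr (C w.1) z else 0) := by
    intro z hz
    have hyy : y.1 * (y.1⁻¹ * z) = z := by group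
    rw [Set.indicator_apply]
    by_cases hcW : y.1⁻¹ * z ∈ WJ cs J
    · rw [if_pos (show y.1⁻¹ * z ∈ S from ⟨hcW, by rw [hyy]; exact hTz z hz⟩),
        if_pos hcW, hg]
      simp only []
      rw [hyy]
    · rw [if_neg (fun hS' => hcW hS'.1), if_neg hcW]
  rw [h1, h2]
  exact Finset.sum_congr rfl fun z hz => (h3 z hz).symm

end KLPaper
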